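/- Let k ≥ 0 and j ≥ 1 be integers and let M ∈ C^k([0,∞), ℝ). Then the j-fold convolution power M^{*j} is k times continuously differentiable on [0,∞), and for every τ > 0 one has |d^k/dτ^k M^{*j}(τ)| ≤ e^τ · ‖M‖_{C^k([0,τ])}^j. -/

import Mathlib

open Set MeasureTheory

/-- Convolution on `[0,∞)` (via signed interval integral): `(f*g)(t) = ∫_0^t f(t-s) g(s) ds`. -/
noncomputable def conv (f g : ℝ → ℝ) : ℝ → ℝ :=
  fun t => ∫ s in (0:ℝ)..t, f (t - s) * g s

/-- `j`-fold convolution power of `M`, with the conventions `M^{*0} = 0` and `M^{*1} = M`. -/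
noncomputable def convPow (M : ℝ → ℝ) : ℕ → ℝ → ℝ
  | 0 => fun _ => 0
  | 1 => M
  | (j+2) => conv M (convPow M (j+1))

/-- The norm `‖f‖_{C^k([0,t])} = ∑_{l=0}^k max_{0 ≤ τ ≤ t} |f^{(l)}(τ)|`,
derivatives taken within `[0,∞)`. -/
noncomputable def CkNorm (k : ℕ) (t : ℝ) (f : ℝ → ℝ) : ℝ :=
  ∑ l ∈ Finset.range (k+1), ⨆ τ : Set.Icc (0:ℝ) t, |iteratedDerivWithin l f (Set.Ici 0) τ|

/-- extend a function on `[0,∞)` to `ℝ` by precomposing with `max · 0`. -/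
noncomputable def extp (f : ℝ → ℝ) : ℝ → ℝ := fun x => f (max x 0)

lemma extp_eq (f : ℝ → ℝ) {x : ℝ} (hx : 0 ≤ x) : extp f x = f x := by
  simp [extp, max_eq_left hx]

lemma continuous_extp {f : ℝ → ℝ} (hf : ContinuousOn f (Set.Ici 0)) :
    Continuous (extp f) :=
  hf.comp_continuous (continuous_id.max continuous_const)
    (fun x => le_max_right x 0)

lemma conv_congr_nonneg {f₁ f₂ g₁ g₂ : ℝ → ℝ} {t : ℝ} (ht : 0 ≤ t)
    (hf : ∀ x ∈ Set.Icc (0:ℝ) t, f₁ x = f₂ x) (hg : ∀ x ∈ Set.Icc (0:ℝ) t, g₁ x = g₂ x) :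
    conv f₁ g₁ t = conv f₂ g₂ t := by
  refine intervalIntegral.integral_congr fun s hs => ?_
  rw [Set.uIcc_of_le ht] at hs
  rw [hf (t - s) ⟨by linarith [hs.2], by linarith [hs.1]⟩, hg s hs]

lemma conv_continuousOn {f g : ℝ → ℝ} (hf : ContinuousOn f (Set.Ici 0))
    (hg : ContinuousOn g (Set.Ici 0)) : ContinuousOn (conv f g) (Set.Ici 0) := by
  have hc : Continuous (fun t : ℝ => ∫ s in (0:ℝ)..t, extp f (t - s) * extp g s) := by
    apply intervalIntegral.continuous_parametric_intervalIntegral_of_continuous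
      (f := fun (x : ℝ) (t : ℝ) => extp f (x - t) * extp g t) _ continuous_id
    exact (((continuous_extp hf).comp (continuous_fst.sub continuous_snd)).mul
      ((continuous_extp hg).comp continuous_snd))
  refine hc.continuousOn.congr fun t ht => ?_
  exact conv_congr_nonneg ht (fun x hx => extp_eq f hx.1) (fun x hx => extp_eq g hx.1) |>.symm

set_option maxHeartbeats 1000000 in
/-- Fubini on the triangle `0 ≤ s ≤ u ≤ t` for a (globally) continuous integrand. -/
lemma fubini_triangle {H : ℝ → ℝ → ℝ} (hH : Continuous (Function.uncurry H))
    {t : ℝ} (ht : 0 ≤ t) :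
    (∫ u in (0:ℝ)..t, ∫ s in (0:ℝ)..u, H u s) = ∫ s in (0:ℝ)..t, ∫ u in s..t, H u s := by
  set K : ℝ → ℝ → ℝ := fun u s => if s ≤ u then H u s else 0 with hKdef
  have hTmeas : MeasurableSet {p : ℝ × ℝ | p.2 ≤ p.1} :=
    (isClosed_le continuous_snd continuous_fst).measurableSet
  have hInt : Integrable (Function.uncurry K)
      ((volume.restrict (Set.Ioc (0:ℝ) t)).prod (volume.restrict (Set.Ioc (0:ℝ) t))) := by
    rw [Measure.prod_restrict]
    have h1 : IntegrableOn (Function.uncurry H) (Set.Icc 0 t ×ˢ Set.Icc 0 t)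
        (volume.prod volume) :=
      hH.continuousOn.integrableOn_compact (isCompact_Icc.prod isCompact_Icc)
    have h2 : IntegrableOn (Function.uncurry H) (Set.Ioc 0 t ×ˢ Set.Ioc 0 t)
        (volume.prod volume) :=
      h1.mono_set (Set.prod_mono Set.Ioc_subset_Icc_self Set.Ioc_subset_Icc_self)
    have h3 := h2.indicator (t := {p : ℝ × ℝ | p.2 ≤ p.1}) hTmeas
    refine h3.congr_fun (fun p _ => ?_) (measurableSet_Ioc.prod measurableSet_Ioc)
    by_cases h : p.2 ≤ p.1 <;>
      simp [Set.indicator_apply, h, Function.uncurry, hKdef]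
  calc (∫ u in (0:ℝ)..t, ∫ s in (0:ℝ)..u, H u s)
      = ∫ u in Set.Ioc (0:ℝ) t, ∫ s in Set.Ioc (0:ℝ) t, K u s := by
        rw [intervalIntegral.integral_of_le ht]
        refine setIntegral_congr_fun measurableSet_Ioc (fun u hu => ?_)
        have hu0 : (0:ℝ) ≤ u := le_of_lt hu.1
        rw [intervalIntegral.integral_of_le hu0]
        have : ∀ s : ℝ, K u s = Set.indicator (Set.Iic u) (H u) s := by
          intro s; by_cases h : s ≤ u <;> simp [hKdef, Set.indicator_apply, h]
        calc (∫ s in Set.Ioc (0:ℝ) u, H u s)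
            = ∫ s in Set.Ioc (0:ℝ) t ∩ Set.Iic u, H u s := by
              rw [Set.Ioc_inter_Iic, min_eq_right hu.2]
          _ = ∫ s in Set.Ioc (0:ℝ) t, Set.indicator (Set.Iic u) (H u) s := by
              rw [setIntegral_indicator measurableSet_Iic]
          _ = ∫ s in Set.Ioc (0:ℝ) t, K u s := by
              exact setIntegral_congr_fun measurableSet_Ioc (fun s _ => (this s).symm)
    _ = ∫ s in Set.Ioc (0:ℝ) t, ∫ u in Set.Ioc (0:ℝ) t, K u s := by
        exact MeasureTheory.integral_integral_swap hInt
    _ = ∫ s in (0:ℝ)..t, ∫ u in s..t, H u s := by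
        rw [intervalIntegral.integral_of_le ht]
        refine setIntegral_congr_fun measurableSet_Ioc (fun s hs => ?_)
        have : ∀ u : ℝ, K u s = Set.indicator (Set.Ici s) (fun u => H u s) u := by
          intro u; by_cases h : s ≤ u <;> simp [hKdef, Set.indicator_apply, h]
        calc (∫ u in Set.Ioc (0:ℝ) t, K u s)
            = ∫ u in Set.Ioc (0:ℝ) t, Set.indicator (Set.Ici s) (fun u => H u s) u := by
              exact setIntegral_congr_fun measurableSet_Ioc (fun u _ => this u)
          _ = ∫ u in Set.Ioc (0:ℝ) t ∩ Set.Ici s, H u s := by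
              rw [setIntegral_indicator measurableSet_Ici]
          _ = ∫ u in Set.Icc s t, H u s := by
              have hset : Set.Ioc (0:ℝ) t ∩ Set.Ici s = Set.Icc s t := by
                ext u
                simp only [Set.mem_inter_iff, Set.mem_Ioc, Set.mem_Ici, Set.mem_Icc]
                constructor
                · rintro ⟨⟨_, h2⟩, h3⟩; exact ⟨h3, h2⟩
                · rintro ⟨h1, h2⟩; exact ⟨⟨lt_of_lt_of_le hs.1 h1, h2⟩, h1⟩
              rw [hset]
          _ = ∫ u in Set.Ioc s t, H u s := integral_Icc_eq_integral_Ioc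
          _ = ∫ u in s..t, H u s := (intervalIntegral.integral_of_le hs.2).symm

lemma conv_eq_integral {f f' g : ℝ → ℝ} (hf : ContinuousOn f (Set.Ici 0))
    (hder : ∀ x ∈ Set.Ioi (0:ℝ), HasDerivAt f (f' x) x)
    (hf' : Continuous f') (hg : Continuous g) {t : ℝ} (ht : 0 ≤ t) :
    conv f g t = f 0 * (∫ s in (0:ℝ)..t, g s)
      + ∫ u in (0:ℝ)..t, ∫ s in (0:ℝ)..u, f' (u - s) * g s := by
  have hH : Continuous (Function.uncurry fun u s => f' (u - s) * g s) :=
    (hf'.comp (continuous_fst.sub continuous_snd)).mul (hg.comp continuous_snd)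
  have key : (∫ u in (0:ℝ)..t, ∫ s in (0:ℝ)..u, f' (u - s) * g s)
      = conv f g t - f 0 * (∫ s in (0:ℝ)..t, g s) := by
    rw [fubini_triangle hH ht]
    have inner : ∀ s ∈ Set.uIcc (0:ℝ) t,
        (∫ u in s..t, f' (u - s) * g s) = (f (t - s) - f 0) * g s := by
      intro s hs
      rw [Set.uIcc_of_le ht] at hs
      rw [intervalIntegral.integral_mul_const]
      congr 1
      have h1 : (∫ u in s..t, f' (u - s)) = ∫ v in (0:ℝ)..(t - s), f' v := by
        rw [intervalIntegral.integral_comp_sub_right f' s, sub_self]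
      rw [h1]
      exact intervalIntegral.integral_eq_sub_of_hasDeriv_right_of_le (by linarith [hs.2])
        (hf.mono (fun x hx => hx.1)) (fun x hx => (hder x hx.1).hasDerivWithinAt)
        (hf'.intervalIntegrable _ _)
    rw [intervalIntegral.integral_congr inner]
    have i1 : IntervalIntegrable (fun s => f (t - s) * g s) volume 0 t := by
      apply ContinuousOn.intervalIntegrable
      apply ContinuousOn.mul _ hg.continuousOn
      refine hf.comp (continuous_const.sub continuous_id).continuousOn ?_
      intro s hs
      rw [Set.uIcc_of_le ht] at hs
      exact sub_nonneg.2 hs.2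
    have i2 : IntervalIntegrable (fun s => f 0 * g s) volume 0 t :=
      (continuous_const.mul hg).intervalIntegrable _ _
    have : (fun s => (f (t - s) - f 0) * g s)
        = fun s => f (t - s) * g s - f 0 * g s := by funext s; ring
    rw [this, intervalIntegral.integral_sub i1 i2, intervalIntegral.integral_const_mul]
    rfl
  rw [key]; ring

lemma conv_hasDerivWithinAt {f f' g : ℝ → ℝ} (hf : ContinuousOn f (Set.Ici 0))
    (hder : ∀ x ∈ Set.Ici (0:ℝ), HasDerivWithinAt f (f' x) (Set.Ici 0) x)
    (hf'c : ContinuousOn f' (Set.Ici 0)) (hg : ContinuousOn g (Set.Ici 0)) :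
    ∀ t ∈ Set.Ici (0:ℝ),
      HasDerivWithinAt (conv f g) (f 0 * g t + conv f' g t) (Set.Ici 0) t := by
  intro t ht
  set F' := extp f' with hF'
  set G := extp g with hG
  have hF'c : Continuous F' := continuous_extp hf'c
  have hGc : Continuous G := continuous_extp hg
  have hderI : ∀ x ∈ Set.Ioi (0:ℝ), HasDerivAt f (F' x) x := by
    intro x hx
    have : HasDerivAt f (f' x) x :=
      ((hder x (Set.mem_Ici.2 (le_of_lt hx))).hasDerivAt (Ici_mem_nhds hx))
    rwa [hF', extp_eq f' (le_of_lt hx)] 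
  set c : ℝ → ℝ := fun u => ∫ s in (0:ℝ)..u, F' (u - s) * G s with hc
  have hcc : Continuous c := by
    apply intervalIntegral.continuous_parametric_intervalIntegral_of_continuous
      (f := fun (x : ℝ) (s : ℝ) => F' (x - s) * G s) _ continuous_id
    exact ((hF'c.comp (continuous_fst.sub continuous_snd)).mul (hGc.comp continuous_snd))
  set Φ : ℝ → ℝ := fun u => f 0 * (∫ s in (0:ℝ)..u, G s) + ∫ v in (0:ℝ)..u, c v with hΦ
  have hagree : ∀ u ∈ Set.Ici (0:ℝ), conv f g u = Φ u := by
    intro u hu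
    have h1 : conv f g u = conv f G u :=
      conv_congr_nonneg hu (fun x _ => rfl) (fun x hx => (extp_eq g hx.1).symm)
    rw [h1, hΦ]
    exact conv_eq_integral hf hderI hF'c hGc hu
  have hΦd : HasDerivAt Φ (f 0 * G t + c t) t := by
    have h1 : HasDerivAt (fun u => ∫ s in (0:ℝ)..u, G s) (G t) t :=
      intervalIntegral.integral_hasDerivAt_right (hGc.intervalIntegrable _ _)
        hGc.stronglyMeasurable.stronglyMeasurableAtFilter hGc.continuousAt
    have h2 : HasDerivAt (fun u => ∫ v in (0:ℝ)..u, c v) (c t) t :=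
      intervalIntegral.integral_hasDerivAt_right (hcc.intervalIntegrable _ _)
        hcc.stronglyMeasurable.stronglyMeasurableAtFilter hcc.continuousAt
    exact (h1.const_mul (f 0)).add h2
  have hval : f 0 * G t + c t = f 0 * g t + conv f' g t := by
    congr 1
    · rw [hG, extp_eq g ht]
    · rw [hc]
      exact (conv_congr_nonneg ht (fun x hx => (extp_eq f' hx.1).symm)
        (fun x hx => (extp_eq g hx.1).symm)).symm
  rw [← hval]
  exact (hΦd.hasDerivWithinAt).congr hagree (hagree t ht)

lemma conv_contDiffOn : ∀ (k : ℕ) {f g : ℝ → ℝ}, ContDiffOn ℝ k f (Set.Ici 0) →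
    ContDiffOn ℝ k g (Set.Ici 0) → ContDiffOn ℝ k (conv f g) (Set.Ici 0) := by
  intro k
  induction k with
  | zero =>
    intro f g hf hg
    rw [show ((0:ℕ):WithTop ℕ∞) = 0 from rfl, contDiffOn_zero] at *
    exact conv_continuousOn hf hg
  | succ k IH =>
    intro f g hf hg
    have hcast : ((k+1:ℕ) : WithTop ℕ∞) = (k : WithTop ℕ∞) + 1 := by push_cast; rfl
    rw [hcast] at hf ⊢
    have hgk : ContDiffOn ℝ k g (Set.Ici 0) := hg.of_le (by exact_mod_cast Nat.le_succ k)
    have hfd : DifferentiableOn ℝ f (Set.Ici 0) :=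
      hf.differentiableOn (by simp)
    rw [contDiffOn_succ_iff_derivWithin (uniqueDiffOn_Ici 0)] at hf ⊢
    obtain ⟨-, -, hf'⟩ := hf
    set f' := derivWithin f (Set.Ici 0) with hf'def
    have hder : ∀ x ∈ Set.Ici (0:ℝ), HasDerivWithinAt f (f' x) (Set.Ici 0) x :=
      fun x hx => (hfd x hx).hasDerivWithinAt
    have hfc : ContinuousOn f (Set.Ici 0) := hfd.continuousOn
    have hconv' := conv_hasDerivWithinAt hfc hder hf'.continuousOn hgk.continuousOn
    refine ⟨fun t ht => (hconv' t ht).differentiableWithinAt, by simp, ?_⟩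
    have hψ : ContDiffOn ℝ k (fun t => f 0 * g t + conv f' g t) (Set.Ici 0) :=
      (contDiffOn_const.mul hgk).add (IH hf' hgk)
    exact hψ.congr fun t ht => (hconv' t ht).derivWithin (uniqueDiffOn_Ici 0 t ht)

lemma conv_iteratedDerivWithin {k : ℕ} {f g : ℝ → ℝ}
    (hf : ContDiffOn ℝ k f (Set.Ici 0)) (hg : ContDiffOn ℝ k g (Set.Ici 0)) :
    ∀ l : ℕ, l ≤ k → ∀ t ∈ Set.Ici (0:ℝ),
      iteratedDerivWithin l (conv f g) (Set.Ici 0) t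
        = (∑ i ∈ Finset.range l, iteratedDerivWithin i f (Set.Ici 0) 0
            * iteratedDerivWithin (l-1-i) g (Set.Ici 0) t)
          + conv (iteratedDerivWithin l f (Set.Ici 0)) g t := by
  intro l
  induction l with
  | zero => intro _ t ht; simp [iteratedDerivWithin_zero]
  | succ l IH =>
    intro hl1 t ht
    have hl : l ≤ k := Nat.le_of_succ_le hl1
    have hlk : (l : WithTop ℕ∞) < (k : WithTop ℕ∞) := by exact_mod_cast Nat.lt_of_succ_le hl1
    have hUD := uniqueDiffOn_Ici (0:ℝ)
    have hfl_diff : DifferentiableOn ℝ (iteratedDerivWithin l f (Set.Ici 0)) (Set.Ici 0) :=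
      hf.differentiableOn_iteratedDerivWithin hlk hUD
    have hfl1 : ∀ x ∈ Set.Ici (0:ℝ), HasDerivWithinAt (iteratedDerivWithin l f (Set.Ici 0))
        (iteratedDerivWithin (l+1) f (Set.Ici 0) x) (Set.Ici 0) x := by
      intro x hx
      rw [iteratedDerivWithin_succ]
      exact (hfl_diff x hx).hasDerivWithinAt
    have hconv' := conv_hasDerivWithinAt
      (hf.continuousOn_iteratedDerivWithin (by exact_mod_cast hl) hUD) hfl1
      (hf.continuousOn_iteratedDerivWithin (by exact_mod_cast hl1) hUD) hg.continuousOn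
    have hsum : HasDerivWithinAt
        (fun τ => ∑ i ∈ Finset.range l, iteratedDerivWithin i f (Set.Ici 0) 0
            * iteratedDerivWithin (l-1-i) g (Set.Ici 0) τ)
        (∑ i ∈ Finset.range l, iteratedDerivWithin i f (Set.Ici 0) 0
            * iteratedDerivWithin (l-i) g (Set.Ici 0) t) (Set.Ici 0) t := by
      refine HasDerivWithinAt.fun_sum fun i hi => ?_
      rw [Finset.mem_range] at hi
      have h1 : l - 1 - i < k := by omega
      have h2 : (l - 1 - i) + 1 = l - i := by omega
      have hdiff : DifferentiableOn ℝ (iteratedDerivWithin (l-1-i) g (Set.Ici 0))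
          (Set.Ici 0) :=
        hg.differentiableOn_iteratedDerivWithin (by exact_mod_cast h1) hUD
      have : HasDerivWithinAt (iteratedDerivWithin (l-1-i) g (Set.Ici 0))
          (iteratedDerivWithin (l-i) g (Set.Ici 0) t) (Set.Ici 0) t := by
        rw [← h2, iteratedDerivWithin_succ]
        exact (hdiff t ht).hasDerivWithinAt
      exact this.const_mul _
    have hφ : HasDerivWithinAt
        (fun τ => (∑ i ∈ Finset.range l, iteratedDerivWithin i f (Set.Ici 0) 0
            * iteratedDerivWithin (l-1-i) g (Set.Ici 0) τ)
          + conv (iteratedDerivWithin l f (Set.Ici 0)) g τ)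
        ((∑ i ∈ Finset.range l, iteratedDerivWithin i f (Set.Ici 0) 0
            * iteratedDerivWithin (l-i) g (Set.Ici 0) t)
          + (iteratedDerivWithin l f (Set.Ici 0) 0 * g t
            + conv (iteratedDerivWithin (l+1) f (Set.Ici 0)) g t)) (Set.Ici 0) t :=
      hsum.add (hconv' t ht)
    rw [iteratedDerivWithin_succ,
      derivWithin_congr (fun x hx => IH hl x hx) (IH hl t ht),
      hφ.derivWithin (hUD t ht), Finset.sum_range_succ]
    have h3 : ∀ x : ℕ, l + 1 - 1 - x = l - x := fun x => by omega
    simp only [h3, Nat.sub_self, iteratedDerivWithin_zero]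
    ring

lemma convPow_succ_eq {M : ℝ → ℝ} {j : ℕ} (hj : 1 ≤ j) :
    convPow M (j+1) = conv M (convPow M j) := by
  obtain ⟨i, rfl⟩ : ∃ i, j = i + 1 := ⟨j - 1, by omega⟩
  rfl

lemma convPow_contDiffOn {k : ℕ} {M : ℝ → ℝ} (hM : ContDiffOn ℝ k M (Set.Ici 0)) :
    ∀ j, 1 ≤ j → ContDiffOn ℝ k (convPow M j) (Set.Ici 0) := by
  intro j hj
  induction j with
  | zero => omega
  | succ i IH =>
    rcases Nat.eq_or_lt_of_le hj with h1 | h2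
    · rw [← h1]; exact hM
    · have hi : 1 ≤ i := by omega
      rw [convPow_succ_eq hi]
      exact conv_contDiffOn k hM (IH hi)

lemma expPartial_continuous (j : ℕ) :
    Continuous (fun s : ℝ => ∑ r ∈ Finset.range j, s ^ r / (Nat.factorial r : ℝ)) :=
  continuous_finset_sum _ fun r _ => (continuous_pow r).div_const _

lemma expPartial_nonneg {j : ℕ} {s : ℝ} (hs : 0 ≤ s) :
    0 ≤ ∑ r ∈ Finset.range j, s ^ r / (Nat.factorial r : ℝ) :=
  Finset.sum_nonneg fun r _ => div_nonneg (pow_nonneg hs r) (Nat.cast_nonneg _)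

lemma expPartial_mono {j : ℕ} {s : ℝ} (hs : 0 ≤ s) :
    (∑ r ∈ Finset.range j, s ^ r / (Nat.factorial r : ℝ))
      ≤ ∑ r ∈ Finset.range (j+1), s ^ r / (Nat.factorial r : ℝ) := by
  rw [Finset.sum_range_succ]
  have : 0 ≤ s ^ j / (Nat.factorial j : ℝ) :=
    div_nonneg (pow_nonneg hs j) (Nat.cast_nonneg _)
  linarith

lemma expPartial_integral {j : ℕ} {x : ℝ} (hx : 0 ≤ x) :
    (∫ s in (0:ℝ)..x, ∑ r ∈ Finset.range j, s ^ r / (Nat.factorial r : ℝ))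
      ≤ ∑ r ∈ Finset.range (j+1), x ^ r / (Nat.factorial r : ℝ) := by
  have hint : ∀ r : ℕ, (∫ s in (0:ℝ)..x, s ^ r / (Nat.factorial r : ℝ))
      = x ^ (r+1) / (Nat.factorial (r+1) : ℝ) := by
    intro r
    rw [show (fun s : ℝ => s ^ r / (Nat.factorial r : ℝ))
        = fun s : ℝ => (Nat.factorial r : ℝ)⁻¹ * s ^ r by funext s; ring]
    rw [intervalIntegral.integral_const_mul, integral_pow]
    rw [Nat.factorial_succ]
    have h1 : ((r:ℝ)+1) ≠ 0 := by positivity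
    have h2 : ((Nat.factorial r : ℕ) : ℝ) ≠ 0 := Nat.cast_ne_zero.2 (Nat.factorial_ne_zero r)
    rw [zero_pow (Nat.succ_ne_zero r), sub_zero]
    push_cast
    rw [div_mul_eq_div_div_swap, inv_mul_eq_div, div_div, mul_comm, ← div_div]
  rw [intervalIntegral.integral_finset_sum
    (fun r _ => (((continuous_pow r).div_const _).intervalIntegrable _ _))]
  rw [Finset.sum_congr rfl fun r _ => hint r]
  rw [Finset.sum_range_succ' (fun r => x ^ r / (Nat.factorial r : ℝ)) j]
  simp only [pow_zero, Nat.factorial_zero, Nat.cast_one]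
  norm_num

lemma convPow_deriv_bound {k : ℕ} {M : ℝ → ℝ} (hM : ContDiffOn ℝ k M (Set.Ici 0))
    {τ : ℝ} (hτ : 0 < τ) :
    ∀ j, 1 ≤ j → ∀ l ≤ k, ∀ x ∈ Set.Icc (0:ℝ) τ,
      |iteratedDerivWithin l (convPow M j) (Set.Ici 0) x|
        ≤ (CkNorm k τ M) ^ j * ∑ r ∈ Finset.range j, x ^ r / (Nat.factorial r : ℝ) := by
  have hUD := uniqueDiffOn_Ici (0:ℝ)
  set A : ℕ → ℝ := fun l => ⨆ p : Set.Icc (0:ℝ) τ, |iteratedDerivWithin l M (Set.Ici 0) ↑p|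
    with hAdef
  have hCk : CkNorm k τ M = ∑ l ∈ Finset.range (k+1), A l := rfl
  have hbdd : ∀ l, l ≤ k → BddAbove (Set.range fun p : Set.Icc (0:ℝ) τ =>
      |iteratedDerivWithin l M (Set.Ici 0) ↑p|) := by
    intro l hl
    have hc : ContinuousOn (fun x : ℝ => |iteratedDerivWithin l M (Set.Ici 0) x|)
        (Set.Icc 0 τ) :=
      ((hM.continuousOn_iteratedDerivWithin (by exact_mod_cast hl) hUD).mono
        (fun x hx => hx.1)).abs
    have h2 : BddAbove ((fun x : ℝ => |iteratedDerivWithin l M (Set.Ici 0) x|) ''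
        Set.Icc 0 τ) := (isCompact_Icc.image_of_continuousOn hc).bddAbove
    refine h2.mono ?_
    rintro y ⟨p, rfl⟩
    exact ⟨↑p, p.2, rfl⟩
  have hA_le : ∀ l, l ≤ k → ∀ x ∈ Set.Icc (0:ℝ) τ,
      |iteratedDerivWithin l M (Set.Ici 0) x| ≤ A l := by
    intro l hl x hx
    exact le_ciSup (hbdd l hl) (⟨x, hx⟩ : Set.Icc (0:ℝ) τ)
  have hA_nonneg : ∀ l, l ≤ k → 0 ≤ A l := by
    intro l hl
    exact le_trans (abs_nonneg _) (hA_le l hl 0 ⟨le_refl 0, le_of_lt hτ⟩)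
  have hN_nonneg : 0 ≤ CkNorm k τ M := by
    rw [hCk]
    exact Finset.sum_nonneg fun l hl => hA_nonneg l (by
      have := Finset.mem_range.1 hl; omega)
  have hAsum : ∀ l, l ≤ k → (∑ i ∈ Finset.range l, A i) + A l ≤ CkNorm k τ M := by
    intro l hl
    rw [hCk, ← Finset.sum_range_succ]
    refine Finset.sum_le_sum_of_subset_of_nonneg
      (Finset.range_subset_range.2 (by omega)) (fun i hi _ => hA_nonneg i (by
        have := Finset.mem_range.1 hi; omega))
  intro j hj
  induction j, hj using Nat.le_induction with
  | base =>
    intro l hl x hx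
    have h1 : |iteratedDerivWithin l M (Set.Ici 0) x| ≤ A l := hA_le l hl x hx
    have h2 : A l ≤ CkNorm k τ M := by
      have := hAsum l hl
      have h3 : 0 ≤ ∑ i ∈ Finset.range l, A i :=
        Finset.sum_nonneg fun i hi => hA_nonneg i (by
          have := Finset.mem_range.1 hi; omega)
      linarith
    simpa [convPow] using h1.trans (h2.trans (le_of_eq (by norm_num [Nat.factorial])))
  | succ j hj IH =>
    intro l hl x hx
    obtain ⟨hx0, hxτ⟩ := hx
    set N := CkNorm k τ M with hNdef
    set E : ℕ → ℝ → ℝ := fun j s => ∑ r ∈ Finset.range j, s ^ r / (Nat.factorial r : ℝ)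
      with hEdef
    have hgCD : ContDiffOn ℝ k (convPow M j) (Set.Ici 0) := convPow_contDiffOn hM j hj
    have hxI : x ∈ Set.Ici (0:ℝ) := hx0
    rw [convPow_succ_eq hj,
      conv_iteratedDerivWithin hM hgCD l hl x hxI]
    set g := convPow M j with hgdef
    have hQ : (0:ℝ) ≤ N ^ j * E (j+1) x :=
      mul_nonneg (pow_nonneg hN_nonneg j) (expPartial_nonneg hx0)
    have hEmono : E j x ≤ E (j+1) x := expPartial_mono hx0
    -- bound for each summand of the boundary sum
    have bound1 : |∑ i ∈ Finset.range l, iteratedDerivWithin i M (Set.Ici 0) 0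
        * iteratedDerivWithin (l-1-i) g (Set.Ici 0) x|
        ≤ (∑ i ∈ Finset.range l, A i) * (N ^ j * E (j+1) x) := by
      refine (Finset.abs_sum_le_sum_abs _ _).trans ?_
      rw [Finset.sum_mul]
      refine Finset.sum_le_sum fun i hi => ?_
      rw [Finset.mem_range] at hi
      rw [abs_mul]
      have hi_le : i ≤ k := by omega
      have hii : l - 1 - i ≤ k := by omega
      have t1 : |iteratedDerivWithin i M (Set.Ici 0) 0| ≤ A i :=
        hA_le i hi_le 0 ⟨le_refl 0, le_of_lt hτ⟩
      have t2 : |iteratedDerivWithin (l-1-i) g (Set.Ici 0) x| ≤ N ^ j * E j x :=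
        IH (l-1-i) hii x ⟨hx0, hxτ⟩
      have t3 : N ^ j * E j x ≤ N ^ j * E (j+1) x :=
        mul_le_mul_of_nonneg_left hEmono (pow_nonneg hN_nonneg j)
      exact mul_le_mul t1 (t2.trans t3) (abs_nonneg _) (hA_nonneg i hi_le)
    have bound2 : |conv (iteratedDerivWithin l M (Set.Ici 0)) g x|
        ≤ A l * (N ^ j * E (j+1) x) := by
      have hMl_cont : ContinuousOn (iteratedDerivWithin l M (Set.Ici 0)) (Set.Ici 0) :=
        hM.continuousOn_iteratedDerivWithin (by exact_mod_cast hl) hUD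
      have hg_cont : ContinuousOn g (Set.Ici 0) := hgCD.continuousOn
      have int1 : IntervalIntegrable
          (fun s => |iteratedDerivWithin l M (Set.Ici 0) (x - s) * g s|) volume 0 x := by
        apply ContinuousOn.intervalIntegrable
        apply ContinuousOn.abs
        apply ContinuousOn.mul
        · refine hMl_cont.comp (continuous_const.sub continuous_id).continuousOn ?_
          intro s hs
          rw [Set.uIcc_of_le hx0] at hs
          exact sub_nonneg.2 hs.2
        · refine hg_cont.mono ?_
          intro s hs
          rw [Set.uIcc_of_le hx0] at hs
          exact hs.1
      have int2 : IntervalIntegrable (fun s => A l * (N ^ j * E j s)) volume 0 x :=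
        (continuous_const.mul (continuous_const.mul (expPartial_continuous j))).intervalIntegrable _ _
      have hpt : ∀ s ∈ Set.Icc (0:ℝ) x,
          |iteratedDerivWithin l M (Set.Ici 0) (x - s) * g s| ≤ A l * (N ^ j * E j s) := by
        intro s hs
        rw [abs_mul]
        have u1 : |iteratedDerivWithin l M (Set.Ici 0) (x - s)| ≤ A l :=
          hA_le l hl (x - s) ⟨sub_nonneg.2 hs.2, by linarith [hs.1]⟩
        have u2 : |g s| ≤ N ^ j * E j s := by
          have := IH 0 (Nat.zero_le k) s ⟨hs.1, le_trans hs.2 hxτ⟩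
          simpa [iteratedDerivWithin_zero] using this
        exact mul_le_mul u1 u2 (abs_nonneg _) (hA_nonneg l hl)
      calc |conv (iteratedDerivWithin l M (Set.Ici 0)) g x|
          ≤ ∫ s in (0:ℝ)..x, |iteratedDerivWithin l M (Set.Ici 0) (x - s) * g s| :=
            intervalIntegral.abs_integral_le_integral_abs hx0
        _ ≤ ∫ s in (0:ℝ)..x, A l * (N ^ j * E j s) :=
            intervalIntegral.integral_mono_on hx0 int1 int2 hpt
        _ = (A l * N ^ j) * ∫ s in (0:ℝ)..x, E j s := by
            rw [← intervalIntegral.integral_const_mul]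
            congr 1
            funext s
            ring
        _ ≤ (A l * N ^ j) * E (j+1) x := by
            refine mul_le_mul_of_nonneg_left (expPartial_integral hx0) ?_
            exact mul_nonneg (hA_nonneg l hl) (pow_nonneg hN_nonneg j)
        _ = A l * (N ^ j * E (j+1) x) := by ring
    calc |(∑ i ∈ Finset.range l, iteratedDerivWithin i M (Set.Ici 0) 0
            * iteratedDerivWithin (l-1-i) g (Set.Ici 0) x)
          + conv (iteratedDerivWithin l M (Set.Ici 0)) g x|
        ≤ (∑ i ∈ Finset.range l, A i) * (N ^ j * E (j+1) x)
          + A l * (N ^ j * E (j+1) x) := (abs_add_le _ _).trans (add_le_add bound1 bound2)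
      _ = ((∑ i ∈ Finset.range l, A i) + A l) * (N ^ j * E (j+1) x) := by ring
      _ ≤ N * (N ^ j * E (j+1) x) := mul_le_mul_of_nonneg_right (hAsum l hl) hQ
      _ = N ^ (j+1) * E (j+1) x := by ring

lemma CkNorm_nonneg {k : ℕ} {M : ℝ → ℝ} (hM : ContDiffOn ℝ k M (Set.Ici 0))
    {τ : ℝ} (hτ : 0 ≤ τ) : 0 ≤ CkNorm k τ M := by
  have hUD := uniqueDiffOn_Ici (0:ℝ)
  refine Finset.sum_nonneg fun l hl => ?_
  have hlk : l ≤ k := by have := Finset.mem_range.1 hl; omega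
  have hc : ContinuousOn (fun x : ℝ => |iteratedDerivWithin l M (Set.Ici 0) x|)
      (Set.Icc 0 τ) :=
    ((hM.continuousOn_iteratedDerivWithin (by exact_mod_cast hlk) hUD).mono
      (fun x hx => hx.1)).abs
  have h2 : BddAbove ((fun x : ℝ => |iteratedDerivWithin l M (Set.Ici 0) x|) ''
      Set.Icc 0 τ) := (isCompact_Icc.image_of_continuousOn hc).bddAbove
  have hbdd : BddAbove (Set.range fun p : Set.Icc (0:ℝ) τ =>
      |iteratedDerivWithin l M (Set.Ici 0) ↑p|) := by
    refine h2.mono ?_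
    rintro y ⟨p, rfl⟩
    exact ⟨↑p, p.2, rfl⟩
  exact le_trans (abs_nonneg _) (le_ciSup hbdd (⟨0, le_refl 0, hτ⟩ : Set.Icc (0:ℝ) τ))

/-- For `M ∈ C^k([0,∞))` and `j ≥ 1`, the `j`-fold convolution power `M^{*j}`
is `C^k` on `[0,∞)` and `|d^k/dτ^k M^{*j}(τ)| ≤ e^τ ‖M‖_{C^k([0,τ])}^j` for every `τ > 0`. -/
theorem convPow_contDiff_and_deriv_bound
    (k j : ℕ) (hj : 1 ≤ j) (M : ℝ → ℝ) (hM : ContDiffOn ℝ k M (Set.Ici 0)) :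
    ContDiffOn ℝ k (convPow M j) (Set.Ici 0) ∧
      ∀ τ : ℝ, 0 < τ →
        |iteratedDerivWithin k (convPow M j) (Set.Ici 0) τ| ≤
          Real.exp τ * (CkNorm k τ M) ^ j := by
  constructor
  · exact convPow_contDiffOn hM j hj
  · intro τ hτ
    have hE := convPow_deriv_bound hM hτ j hj k le_rfl τ ⟨le_of_lt hτ, le_refl τ⟩
    have hexp : (∑ r ∈ Finset.range j, τ ^ r / (Nat.factorial r : ℝ)) ≤ Real.exp τ :=
      Real.sum_le_exp_of_nonneg (le_of_lt hτ) j
    have hN : 0 ≤ CkNorm k τ M := CkNorm_nonneg hM (le_of_lt hτ)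
    refine hE.trans ?_
    rw [mul_comm (Real.exp τ)]
    exact mul_le_mul_of_nonneg_left hexp (pow_nonneg hN j)
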